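/- Let x and y be aspects with x ≠ y, and let d on pairs of aspect sequences be defined by: d(ᾱ,β̄) holds iff there exists an index i with i < length(ᾱ), i < length(β̄), and ᾱᵢ ≠ β̄ᵢ. Suppose (i) for every action a and aspect sequences ᾱ, β̄, if d(ᾱ,β̄) and a has aspect sequence β̄, then for all situations s, t, R_ᾱ(s,t) ↔ R_ᾱ(a(s),t); (ii) the commutative constraint holds: for all situations s, t and aspects α₁, α₂, R_{α₁,α₂}(s,t) ↔ R_{α₂,α₁}(s,t); (iii) the action a has aspect sequence (x,y); and (iv) the fluent p admits an existential representation over (x,y), i.e., there exists a predicate q such that for all s, p(s) ↔ ∃t (q(t) ∧ R_{x,y}(s,t)). Then the frame axiom F[a,p] holds: for all s, p(s) ↔ p(a(s)). -/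
import Mathlib

/-- `RSeq R αs s t` : `t` is an `αs`-aspect of `s`, defined by composition,
with `[α]` giving `R α`. -/
def RSeq {S A : Type*} (R : A → S → S → Prop) : List A → S → S → Prop
  | [], s, t => s = t
  | α :: rest, s, t => ∃ u : S, R α s u ∧ RSeq R rest u t

/-- In the existential sequential relational formalism with the commutative
constraint, for an action `a` of aspect sequence `(x,y)` (with `x ≠ y`) and a
fluent `p` with an existential representation over `(x,y)`, the frame axiom
`F[a,p]` is derivable. -/
theorem commutative_constraint_frame_axiom
    {S A : Type*} (R : A → S → S → Prop) (d : List A → List A → Prop)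
    (actionAspect : (S → S) → List A → Prop)
    (x y : A) (hxy : x ≠ y)
    (hd : ∀ αs βs : List A, d αs βs ↔
      ∃ (i : ℕ) (hα : i < αs.length) (hβ : i < βs.length),
        αs.get ⟨i, hα⟩ ≠ βs.get ⟨i, hβ⟩)
    (a : S → S) (p : S → Prop)
    (h1 : ∀ (a' : S → S) (αs βs : List A), d αs βs → actionAspect a' βs →
      ∀ s t : S, RSeq R αs s t ↔ RSeq R αs (a' s) t)
    (hcomm : ∀ (s t : S) (α₁ α₂ : A),
      RSeq R [α₁, α₂] s t ↔ RSeq R [α₂, α₁] s t)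
    (ha : actionAspect a [x, y])
    (hp : ∃ q : S → Prop, ∀ s : S, p s ↔ ∃ t : S, q t ∧ RSeq R [x, y] s t) :
    ∀ s : S, p s ↔ p (a s) := by
  obtain ⟨q, hq⟩ := hp
  have hdyx : d [y, x] [x, y] := by
    rw [hd]
    exact ⟨0, by simp, by simp, by simpa using Ne.symm hxy⟩
  have key := h1 a [y, x] [x, y] hdyx ha
  intro s
  rw [hq, hq]
  constructor
  · rintro ⟨t, hqt, ht⟩
    exact ⟨t, hqt, (hcomm _ _ _ _).mpr ((key s t).mp ((hcomm _ _ _ _).mp ht))⟩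
  · rintro ⟨t, hqt, ht⟩
    exact ⟨t, hqt, (hcomm _ _ _ _).mpr ((key s t).mpr ((hcomm _ _ _ _).mp ht))⟩
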